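/- For a moment sequence s, a point x ∈ X satisfies s_A(x) ∈ F_s if and only if x ∈ W(s), where F_s is the unique face of S_A with s in its relative interior; consequently W(s) = s_A^{-1}(F_s) and F_s = conv cone s_A(W(s)). -/

import Mathlib

open MeasureTheory


/-- A continuous linear functional on `Fin n → ℝ` is given by a dot product. -/
lemma clm_eq_dot {n : ℕ} (φ : (Fin n → ℝ) →L[ℝ] ℝ) (y : Fin n → ℝ) :
    φ y = ∑ i, y i * φ (Pi.single i 1 : _) := by
  have hy : y = ∑ i, y i • (Pi.single i 1 : Fin n → ℝ) := by
    ext j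
    simp [Pi.single_apply, Finset.sum_apply]
  conv_lhs => rw [hy]
  rw [map_sum]
  simp [smul_eq_mul]

/-- Weak separation of a point from a (possibly non-closed) convex set in `Fin n → ℝ`. -/
lemma weak_separation {n : ℕ} (hn : 0 < n) {C : Set (Fin n → ℝ)} (hC : Convex ℝ C)
    {p : Fin n → ℝ} (hp : p ∉ C) :
    ∃ u : Fin n → ℝ, u ≠ 0 ∧ ∀ t ∈ C, ∑ i, u i * t i ≤ ∑ i, u i * p i := by
  haveI : Nonempty (Fin n) := ⟨⟨0, hn⟩⟩
  set Sph : Set (Fin n → ℝ) := Metric.sphere 0 1 with hSph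
  -- family indexed by finsets of C
  set B : Finset C → Set (Fin n → ℝ) :=
    fun Fs => Sph ∩ {u | ∀ t ∈ Fs, ∑ i, u i * (t : Fin n → ℝ) i ≤ ∑ i, u i * p i} with hB
  have hcont : ∀ v : Fin n → ℝ, Continuous fun u : Fin n → ℝ => ∑ i, u i * v i := by
    intro v
    exact continuous_finset_sum _ fun i _ => (continuous_apply i).mul continuous_const
  have hclosed : ∀ Fs, IsClosed (B Fs) := by
    intro Fs
    refine Metric.isClosed_sphere.inter ?_
    have : {u : Fin n → ℝ | ∀ t ∈ Fs, ∑ i, u i * (t : Fin n → ℝ) i ≤ ∑ i, u i * p i}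
        = ⋂ t ∈ Fs, {u | ∑ i, u i * (t : Fin n → ℝ) i ≤ ∑ i, u i * p i} := by
      ext u; simp
    rw [this]
    exact isClosed_biInter fun t _ => isClosed_le (hcont _) (hcont _)
  have hne : ∀ Fs, (B Fs).Nonempty := by
    intro Fs
    -- separate p strictly from convex hull of the finite set
    set P : Set (Fin n → ℝ) := convexHull ℝ (Subtype.val '' (Fs : Set C)) with hP
    have hPC : P ⊆ C := convexHull_min (by rintro _ ⟨t, _, rfl⟩; exact t.2) hC
    have hpP : p ∉ P := fun h => hp (hPC h)
    obtain ⟨φ, a, b, hφ1, hab, hφ2⟩ := geometric_hahn_banach_compact_closed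
      ((convex_convexHull ℝ _)) (Set.Finite.isCompact_convexHull ℝ
        ((Fs : Set C).toFinite.image _))
      (convex_singleton p) isClosed_singleton (Set.disjoint_singleton_right.2 hpP)
    have hφp : ∀ x ∈ P, φ x < φ p := by
      intro x hx
      exact lt_trans (lt_trans (hφ1 x hx) hab) (hφ2 p rfl)
    -- the vector of φ
    set u : Fin n → ℝ := fun i => φ (Pi.single i 1) with hu
    have hφdot : ∀ y, φ y = ∑ i, u i * y i := by
      intro y
      rw [clm_eq_dot φ y]
      exact Finset.sum_congr rfl fun i _ => mul_comm _ _
    by_cases hu0 : u = 0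
    · -- then φ = 0 on everything; P must be empty
      have hφ0 : ∀ y, φ y = 0 := by intro y; rw [hφdot, hu0]; simp
      -- B Fs : need a sphere point with vacuous/trivial condition
      obtain ⟨w, hw⟩ := (NormedSpace.sphere_nonempty (E := Fin n → ℝ) (x := 0) (r := 1)).2 zero_le_one
      by_cases hFs : Fs = ∅
      · subst hFs
        exact ⟨w, hw, by simp⟩
      · exfalso
        obtain ⟨t, ht⟩ := Finset.nonempty_iff_ne_empty.2 hFs
        have : (t : Fin n → ℝ) ∈ P := subset_convexHull ℝ _ ⟨t, ht, rfl⟩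
        have := hφp _ this
        rw [hφ0, hφ0] at this
        exact lt_irrefl _ this
    · refine ⟨‖u‖⁻¹ • u, ?_, ?_⟩
      · have h1 : ‖u‖ ≠ 0 := fun h => hu0 (norm_eq_zero.1 h)
        simp only [hSph, Metric.mem_sphere, dist_zero_right, norm_smul, norm_inv, norm_norm]
        rw [inv_mul_cancel₀ h1]
      · intro t ht
        have h1 : (0:ℝ) < ‖u‖⁻¹ := inv_pos.2 (norm_pos_iff.2 hu0)
        have h2 : φ (t : Fin n → ℝ) ≤ φ p :=
          le_of_lt (hφp _ (subset_convexHull ℝ _ ⟨t, ht, rfl⟩))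
        rw [hφdot, hφdot] at h2
        have : ∀ y : Fin n → ℝ, ∑ i, (‖u‖⁻¹ • u) i * y i = ‖u‖⁻¹ * ∑ i, u i * y i := by
          intro y
          rw [Finset.mul_sum]
          exact Finset.sum_congr rfl fun i _ => by simp [mul_assoc]
        rw [this, this]
        exact mul_le_mul_of_nonneg_left h2 (le_of_lt h1)
  have hdir : Directed (fun x1 x2 => x1 ⊇ x2) B := by
    intro F1 F2
    refine ⟨F1 ∪ F2, ?_, ?_⟩ <;>
    · intro u hu
      exact ⟨hu.1, fun t ht => hu.2 t (by simp [ht])⟩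
  have hcpt : ∀ Fs, IsCompact (B Fs) := fun Fs =>
    (isCompact_sphere 0 1).of_isClosed_subset (hclosed Fs) Set.inter_subset_left
  obtain ⟨u, hu⟩ := IsCompact.nonempty_iInter_of_directed_nonempty_isCompact_isClosed
    B hdir hne hcpt hclosed
  simp only [Set.mem_iInter] at hu
  refine ⟨u, ?_, ?_⟩
  · intro h
    have := (hu ∅).1
    rw [h] at this
    simp [hSph] at this
  · intro t ht
    exact (hu {⟨t, ht⟩}).2 ⟨t, ht⟩ (by simp)


lemma integrable_dirac_of_measurable {X : Type*} [MeasurableSpace X] {f : X → ℝ}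
    (hf : Measurable f) (x : X) : Integrable f (Measure.dirac x) := by
  refine ⟨hf.aestronglyMeasurable, ?_⟩
  have h : ∫⁻ y, ‖f y‖₊ ∂(Measure.dirac x) = ‖f x‖₊ :=
    lintegral_dirac' x (by exact hf.nnnorm.coe_nnreal_ennreal)
  simp only [HasFiniteIntegral, h]
  rw [lintegral_dirac' x (by fun_prop)]; exact enorm_lt_top


/-- From a relative interior point one can extend any segment a bit beyond. -/
lemma intrinsic_extend {n : ℕ} {F : Set (Fin n → ℝ)} {s y : Fin n → ℝ}
    (hs : s ∈ intrinsicInterior ℝ F) (hy : y ∈ F) :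
    ∃ z ∈ F, ∃ l : ℝ, l ∈ Set.Ioo (0:ℝ) 1 ∧ s = l • y + (1 - l) • z := by
  obtain ⟨s', hs', hval⟩ := mem_intrinsicInterior.1 hs
  have hsA : s ∈ affineSpan ℝ F := hval ▸ s'.2
  have hyA : y ∈ affineSpan ℝ F := subset_affineSpan ℝ F hy
  have hmem : ∀ t : ℝ, t • (s - y) + s ∈ affineSpan ℝ F := by
    intro t
    have := (affineSpan ℝ F).smul_vsub_vadd_mem t hsA hyA hsA
    simpa [vsub_eq_sub, vadd_eq_add] using this
  set γ : ℝ → affineSpan ℝ F := fun t => ⟨t • (s - y) + s, hmem t⟩ with hγ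
  have hγcont : Continuous γ := by
    apply Continuous.subtype_mk
    exact (continuous_id.smul continuous_const).add continuous_const
  have hγ0 : γ 0 = s' := by
    apply Subtype.ext
    simp [hγ, hval]
  have hopen : IsOpen (γ ⁻¹' interior (Subtype.val ⁻¹' F)) :=
    isOpen_interior.preimage hγcont
  have h0mem : (0:ℝ) ∈ γ ⁻¹' interior (Subtype.val ⁻¹' F) := by
    simp only [Set.mem_preimage, hγ0]
    exact hs'
  obtain ⟨ε, hε, hball⟩ := Metric.isOpen_iff.1 hopen 0 h0mem
  have hεmem : (ε/2 : ℝ) ∈ γ ⁻¹' interior (Subtype.val ⁻¹' F) := by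
    apply hball
    simp only [Metric.mem_ball, Real.dist_eq, sub_zero]
    rw [abs_of_pos (by positivity : (0:ℝ) < ε/2)]
    linarith
  have hzF : (ε/2) • (s - y) + s ∈ F := by
    have h1 : γ (ε/2) ∈ Subtype.val ⁻¹' F := interior_subset hεmem
    exact h1
  set e : ℝ := ε/2 with he
  have hepos : 0 < e := by positivity
  refine ⟨e • (s - y) + s, hzF, e / (1 + e), ⟨by positivity, ?_⟩, ?_⟩
  · rw [div_lt_one (by positivity)]
    linarith
  · ext i
    have h1 : (1:ℝ) + e ≠ 0 := by positivity
    simp only [Pi.add_apply, Pi.smul_apply, Pi.sub_apply, smul_eq_mul]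
    field_simp
    ring

section Face
variable {n : ℕ} {S F : Set (Fin n → ℝ)}

lemma face_smul (hSsmul : ∀ (r:ℝ), 0 < r → ∀ t ∈ S, r • t ∈ S) (hext : IsExtreme ℝ S F)
    {t : Fin n → ℝ} (ht : t ∈ F) {c : ℝ} (hc : 0 < c) : c • t ∈ F := by
  have h₁ : c • t ∈ S := hSsmul c hc t (hext.1 ht)
  have h₂ : (1/c) • t ∈ S := hSsmul _ (by positivity) t (hext.1 ht)
  have hseg : t ∈ openSegment ℝ (c • t) ((1/c) • t) := by
    refine ⟨1/(c+1), c/(c+1), by positivity, by positivity, by field_simp <;> ring, ?_⟩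
    ext i
    simp only [Pi.add_apply, Pi.smul_apply, smul_eq_mul]
    have : c + 1 ≠ 0 := by positivity
    field_simp
  exact hext.2 h₁ h₂ ht hseg

lemma face_zero (hS0 : (0 : Fin n → ℝ) ∈ S)
    (hSsmul : ∀ (r:ℝ), 0 < r → ∀ t ∈ S, r • t ∈ S) (hext : IsExtreme ℝ S F)
    (hne : F.Nonempty) : (0 : Fin n → ℝ) ∈ F := by
  obtain ⟨t, ht⟩ := hne
  have h₂ : (2:ℝ) • t ∈ S := hSsmul 2 two_pos t (hext.1 ht)
  have hseg : t ∈ openSegment ℝ (0 : Fin n → ℝ) ((2:ℝ) • t) := by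
    refine ⟨1/2, 1/2, by norm_num, by norm_num, by norm_num, ?_⟩
    ext i
    simp only [Pi.add_apply, Pi.smul_apply, Pi.zero_apply, smul_eq_mul]
    ring
  exact hext.2 hS0 h₂ ht hseg

lemma face_split (hSsmul : ∀ (r:ℝ), 0 < r → ∀ t ∈ S, r • t ∈ S) (hext : IsExtreme ℝ S F)
    {t v w : Fin n → ℝ} (ht : t ∈ F) (hv : v ∈ S) (hw : w ∈ S) (heq : t = v + w) :
    v ∈ F ∧ w ∈ F := by
  have h₁ : (2:ℝ) • v ∈ S := hSsmul 2 two_pos v hv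
  have h₂ : (2:ℝ) • w ∈ S := hSsmul 2 two_pos w hw
  have hseg : t ∈ openSegment ℝ ((2:ℝ) • v) ((2:ℝ) • w) := by
    refine ⟨1/2, 1/2, by norm_num, by norm_num, by norm_num, ?_⟩
    ext i
    simp only [Pi.add_apply, Pi.smul_apply, smul_eq_mul, heq]
    ring
  obtain ⟨hv2, hw2⟩ := And.intro (hext.2 h₁ h₂ ht hseg) (hext.right_mem_of_mem_openSegment h₁ h₂ ht hseg)
  constructor
  · have := face_smul hSsmul hext hv2 (c := 1/2) (by norm_num)
    simpa [smul_smul] using this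
  · have := face_smul hSsmul hext hw2 (c := 1/2) (by norm_num)
    simpa [smul_smul] using this

lemma face_convex (hSconv : Convex ℝ S) (hext : IsExtreme ℝ S F)
    {s : Fin n → ℝ} (hs : s ∈ intrinsicInterior ℝ F) : Convex ℝ F := by
  intro y₁ h₁ y₂ h₂ p q hp0 hq0 hpq
  rcases eq_or_lt_of_le hp0 with rfl | hp
  · rw [zero_add] at hpq; subst hpq; simpa using h₂
  rcases eq_or_lt_of_le hq0 with rfl | hq
  · rw [add_zero] at hpq; subst hpq; simpa using h₁
  obtain ⟨w₁, hw₁, l₁, hl₁, he₁⟩ := intrinsic_extend hs h₁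
  obtain ⟨w₂, hw₂, l₂, hl₂, he₂⟩ := intrinsic_extend hs h₂
  set d : ℝ := min l₁ l₂ / 2 with hd
  have hd0 : 0 < d := by
    have := lt_min hl₁.1 hl₂.1
    positivity
  have hdl₁ : d < l₁ := by
    have h := min_le_left l₁ l₂
    have := hl₁.1; have := hl₂.1
    rw [hd]; rcases min_cases l₁ l₂ with ⟨h1, _⟩ | ⟨h1, _⟩ <;> rw [h1] <;> linarith
  have hdl₂ : d < l₂ := by
    rw [hd]; rcases min_cases l₁ l₂ with ⟨h1, h2⟩ | ⟨h1, h2⟩ <;> rw [h1] <;>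
      [linarith [hl₁.1]; linarith [hl₂.1]]
  have hd1 : d < 1 := lt_trans hdl₁ hl₁.2
  have h1d : (0:ℝ) < 1 - d := by linarith
  -- the two pushed points
  have hu₁ : ((l₁ - d)/(1-d)) • y₁ + ((1 - l₁)/(1-d)) • w₁ ∈ S :=
    hSconv (hext.1 h₁) (hext.1 hw₁) (div_nonneg (by linarith) (by linarith))
      (div_nonneg (by linarith [hl₁.2]) (by linarith))
      (by rw [← add_div, show l₁ - d + (1 - l₁) = 1 - d by ring,
        div_self (ne_of_gt h1d)])
  have hu₂ : ((l₂ - d)/(1-d)) • y₂ + ((1 - l₂)/(1-d)) • w₂ ∈ S :=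
    hSconv (hext.1 h₂) (hext.1 hw₂) (div_nonneg (by linarith) (by linarith))
      (div_nonneg (by linarith [hl₂.2]) (by linarith))
      (by rw [← add_div, show l₂ - d + (1 - l₂) = 1 - d by ring,
        div_self (ne_of_gt h1d)])
  have hz : p • (((l₁ - d)/(1-d)) • y₁ + ((1 - l₁)/(1-d)) • w₁)
      + q • (((l₂ - d)/(1-d)) • y₂ + ((1 - l₂)/(1-d)) • w₂) ∈ S :=
    hSconv hu₁ hu₂ hp0 hq0 hpq
  have hXS : p • y₁ + q • y₂ ∈ S := hSconv (hext.1 h₁) (hext.1 h₂) hp0 hq0 hpq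
  have hsF : s ∈ F := intrinsicInterior_subset hs
  have hseg : s ∈ openSegment ℝ (p • y₁ + q • y₂)
      (p • (((l₁ - d)/(1-d)) • y₁ + ((1 - l₁)/(1-d)) • w₁)
        + q • (((l₂ - d)/(1-d)) • y₂ + ((1 - l₂)/(1-d)) • w₂)) := by
    refine ⟨d, 1 - d, hd0, h1d, by ring, ?_⟩
    ext i
    have hs₁ := congrFun he₁ i
    have hs₂ := congrFun he₂ i
    simp only [Pi.add_apply, Pi.smul_apply, smul_eq_mul] at hs₁ hs₂ ⊢
    have hq' : q = 1 - p := by linarith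
    subst hq'
    rw [hs₁]
    field_simp
    nlinarith [hs₂, sub_ne_zero.2 (ne_of_lt hd1)]
  exact hext.2 hXS hz hsF hseg

end Face

section
variable {X : Type*} [MeasurableSpace X]


/-- Richter's theorem: every moment vector is the moment vector of a finitely
atomic measure whose atoms avoid any fixed null set. -/
lemma richter : ∀ (m : ℕ) (f : X → Fin m → ℝ), (∀ i, Measurable fun x => f x i) →
    ∀ (μ : Measure X), (∀ i, Integrable (fun x => f x i) μ) →
    ∀ (N : Set X), MeasurableSet N → μ N = 0 →
    ∃ (k : ℕ) (c : Fin k → ℝ) (xs : Fin k → X), (∀ j, 0 < c j) ∧ (∀ j, xs j ∉ N) ∧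
      ∀ i, (∫ x, f x i ∂μ) = ∑ j, c j * f (xs j) i := by
  intro m
  induction m with
  | zero =>
    intro f hf μ hint N hN hμN
    exact ⟨0, Fin.elim0, Fin.elim0, fun j => j.elim0, fun j => j.elim0, fun i => i.elim0⟩
  | succ m IH =>
    intro f hf μ hint N hN hμN
    by_contra hgoal
    set s : Fin (m+1) → ℝ := fun i => ∫ x, f x i ∂μ with hs
    set C : Set (Fin (m+1) → ℝ) := {t | ∃ (k : ℕ) (c : Fin k → ℝ) (xs : Fin k → X),
      (∀ j, 0 < c j) ∧ (∀ j, xs j ∉ N) ∧ ∀ i, t i = ∑ j, c j * f (xs j) i} with hC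
    have hsC : s ∉ C := by
      rintro ⟨k, c, xs, h1, h2, h3⟩
      exact hgoal ⟨k, c, xs, h1, h2, h3⟩
    have hzero : (0 : Fin (m+1) → ℝ) ∈ C :=
      ⟨0, Fin.elim0, Fin.elim0, fun j => j.elim0, fun j => j.elim0, fun i => by simp⟩
    have hadd : ∀ t₁ ∈ C, ∀ t₂ ∈ C, t₁ + t₂ ∈ C := by
      rintro t₁ ⟨k₁, c₁, xs₁, hp₁, hn₁, he₁⟩ t₂ ⟨k₂, c₂, xs₂, hp₂, hn₂, he₂⟩
      refine ⟨k₁ + k₂, Fin.append c₁ c₂, Fin.append xs₁ xs₂, ?_, ?_, ?_⟩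
      · exact Fin.addCases (fun j' => by rw [Fin.append_left]; exact hp₁ j')
          (fun j' => by rw [Fin.append_right]; exact hp₂ j')
      · exact Fin.addCases (fun j' => by rw [Fin.append_left]; exact hn₁ j')
          (fun j' => by rw [Fin.append_right]; exact hn₂ j')
      · intro i
        rw [Fin.sum_univ_add]
        simp only [Fin.append_left, Fin.append_right]
        rw [Pi.add_apply, he₁ i, he₂ i]
    have hsmul : ∀ (r : ℝ), 0 < r → ∀ t ∈ C, r • t ∈ C := by
      rintro r hr t ⟨k, c, xs, hp₁, hn₁, he₁⟩
      refine ⟨k, fun j => r * c j, xs, fun j => mul_pos hr (hp₁ j), hn₁, fun i => ?_⟩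
      rw [Pi.smul_apply, smul_eq_mul, he₁ i, Finset.mul_sum]
      exact Finset.sum_congr rfl fun j _ => by ring
    have hconv : Convex ℝ C := by
      intro t₁ h₁ t₂ h₂ p q hp0 hq0 hpq
      rcases eq_or_lt_of_le hp0 with rfl | hp
      · simp only [add_zero, zero_add] at hpq ⊢
        rw [hpq]; simpa using h₂
      rcases eq_or_lt_of_le hq0 with rfl | hq
      · rw [add_zero] at hpq
        rw [hpq]; simpa using h₁
      exact hadd _ (hsmul p hp t₁ h₁) _ (hsmul q hq t₂ h₂)
    obtain ⟨u, hu0, hsep⟩ := weak_separation m.succ_pos hconv hsC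
    -- every element of the cone pairs nonpositively with u
    have hconeneg : ∀ t ∈ C, ∑ i, u i * t i ≤ 0 := by
      intro t ht
      by_contra hpos
      push_neg at hpos
      set r : ℝ := (|∑ i, u i * s i| + 1) / (∑ i, u i * t i) with hr
      have hrpos : 0 < r := div_pos (by positivity) hpos
      have h1 := hsep _ (hsmul r hrpos t ht)
      have h2 : ∑ i, u i * (r • t) i = r * ∑ i, u i * t i := by
        rw [Finset.mul_sum]
        exact Finset.sum_congr rfl fun i _ => by simp [Pi.smul_apply]; ring
      rw [h2, hr, div_mul_cancel₀ _ (ne_of_gt hpos)] at h1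
      have := le_trans h1 (le_abs_self _)
      linarith
    have hsge : 0 ≤ ∑ i, u i * s i := by
      have := hsep 0 hzero
      simpa using this
    have hfxC : ∀ x, x ∉ N → (f x) ∈ C := by
      intro x hx
      exact ⟨1, fun _ => 1, fun _ => x, fun _ => one_pos, fun _ => hx, fun i => by simp⟩
    -- the function G
    set G : X → ℝ := fun x => ∑ i, u i * f x i with hG
    have hGmeas : Measurable G :=
      Finset.measurable_sum _ fun i _ => (measurable_const.mul (hf i))
    have hGint : Integrable G μ :=
      integrable_finset_sum _ fun i _ => ((hint i).const_mul (u i))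
    have hGs : ∫ x, G x ∂μ = ∑ i, u i * s i := by
      rw [integral_finset_sum _ fun i _ => ((hint i).const_mul (u i))]
      exact Finset.sum_congr rfl fun i _ => integral_const_mul _ _
    have haeN : ∀ᵐ x ∂μ, x ∉ N := by
      rw [← MeasureTheory.measure_eq_zero_iff_ae_notMem] at *
      exact hμN
    have hGae : ∀ᵐ x ∂μ, G x ≤ 0 := haeN.mono fun x hx => hconeneg _ (hfxC x hx)
    have hsle : ∑ i, u i * s i ≤ 0 := hGs ▸ integral_nonpos_of_ae hGae
    have hdots : ∑ i, u i * s i = 0 := le_antisymm hsle hsge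
    have hGzero : ∀ᵐ x ∂μ, G x = 0 := by
      have h0 : (0 : X → ℝ) ≤ᶠ[ae μ] fun x => -G x := hGae.mono fun x hx => by
        simpa using neg_nonneg.2 hx
      have hint' : Integrable (fun x => -G x) μ := hGint.neg
      have : ∫ x, -G x ∂μ = 0 := by rw [integral_neg, hGs, hdots, neg_zero]
      have := (integral_eq_zero_iff_of_nonneg_ae h0 hint').1 this
      exact this.mono fun x hx => by simpa using hx
    set N' : Set X := N ∪ {x | G x ≠ 0} with hN'
    have hN'meas : MeasurableSet N' := hN.union (hGmeas (measurableSet_singleton (0:ℝ)).compl)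
    have hN'null : μ N' = 0 := measure_union_null hμN (MeasureTheory.ae_iff.1 hGzero)
    obtain ⟨i₀, hi₀⟩ : ∃ i₀, u i₀ ≠ 0 := Function.ne_iff.1 hu0
    -- apply induction hypothesis to coordinates other than i₀
    obtain ⟨k, c, xs, hcpos, hxsN', hsum⟩ := IH (fun x j => f x (i₀.succAbove j))
      (fun j => hf _) μ (fun j => hint _) N' hN'meas hN'null
    set T : Fin (m+1) → ℝ := fun i => ∑ j, c j * f (xs j) i with hT
    have hTne : ∀ i, i ≠ i₀ → s i = T i := by
      intro i hi
      obtain ⟨j', hj'⟩ := Fin.exists_succAbove_eq hi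
      have h := hsum j'
      rw [hj'] at h
      exact h
    have hdotT : ∑ i, u i * T i = 0 := by
      have hswap : ∑ i, u i * T i = ∑ j, c j * G (xs j) := by
        simp only [hT, hG, Finset.mul_sum]
        rw [Finset.sum_comm]
        exact Finset.sum_congr rfl fun j _ => Finset.sum_congr rfl fun i _ => by ring
      rw [hswap]
      refine Finset.sum_eq_zero fun j _ => ?_
      have hxj : G (xs j) = 0 := by
        have h := hxsN' j
        simp only [hN', Set.mem_union, Set.mem_setOf_eq, not_or, not_not] at h
        exact h.2
      rw [hxj, mul_zero]
    have hkey : u i₀ * (s i₀ - T i₀) = 0 := by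
      have h1 : ∑ i, u i * (s i - T i) = 0 := by
        have h2 : ∑ i, u i * (s i - T i) = (∑ i, u i * s i) - ∑ i, u i * T i := by
          rw [← Finset.sum_sub_distrib]
          exact Finset.sum_congr rfl fun i _ => by ring
        rw [h2, hdots, hdotT, sub_zero]
      rw [← h1]
      symm
      exact Finset.sum_eq_single i₀ (fun i _ hi => by rw [hTne i hi]; ring)
        (fun h => absurd (Finset.mem_univ i₀) h)
    have hi₀eq : s i₀ = T i₀ := by
      rcases mul_eq_zero.1 hkey with h | h
      · exact absurd h hi₀
      · exact sub_eq_zero.1 h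
    exact hsC ⟨k, c, xs, hcpos, (fun j hj => hxsN' j (Or.inl hj)), fun i => by
      rcases eq_or_ne i i₀ with rfl | hi
      · exact hi₀eq
      · exact hTne i hi⟩
end


/-- For a moment sequence `s`, a point `x ∈ X` satisfies `s_A(x) ∈ F_s` iff
`x ∈ W(s)`, where `F_s` is the face of `S_A` having `s` in its relative
interior; consequently `W(s) = s_A⁻¹(F_s)` and `F_s = conv cone s_A(W(s))`. -/
theorem face_eq_conic_hull_of_atoms {X : Type*} [MeasurableSpace X] {m : ℕ}
    (a : Fin m → X → ℝ) (ha : ∀ i, Measurable (a i))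
    (hindep : LinearIndependent ℝ a) :
    let sA : X → (Fin m → ℝ) := fun x i => a i x
    let S : Set (Fin m → ℝ) := {s | ∃ μ : Measure X,
      (∀ i, Integrable (a i) μ) ∧ ∀ i, s i = ∫ x, a i x ∂μ}
    ∀ (s : Fin m → ℝ), s ∈ S →
    ∀ (F : Set (Fin m → ℝ)), IsExtreme ℝ S F → s ∈ intrinsicInterior ℝ F →
    let W : Set X := {x | ∃ μ : Measure X, (∀ i, Integrable (a i) μ) ∧
      (∀ i, s i = ∫ y, a i y ∂μ) ∧ 0 < μ {y | ∀ i, a i y = a i x}}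
    (∀ x : X, sA x ∈ F ↔ x ∈ W) ∧ W = sA ⁻¹' F ∧
      F = {t | ∃ (k : ℕ) (c : Fin k → ℝ) (xs : Fin k → X),
        (∀ j, 0 ≤ c j) ∧ (∀ j, xs j ∈ W) ∧ t = ∑ j, c j • sA (xs j)} := by
  intro sA S s hsS F hext hsI W
  have hsA' : ∀ x i, sA x i = a i x := fun x i => rfl
  -- basic structure of the moment cone S
  have hS0 : (0 : Fin m → ℝ) ∈ S :=
    ⟨0, fun i => integrable_zero_measure, fun i => (integral_zero_measure _).symm⟩
  have hSadd : ∀ u ∈ S, ∀ v ∈ S, u + v ∈ S := by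
    rintro u ⟨μ₁, h₁, e₁⟩ v ⟨μ₂, h₂, e₂⟩
    exact ⟨μ₁ + μ₂, fun i => (h₁ i).add_measure (h₂ i), fun i => by
      rw [integral_add_measure (h₁ i) (h₂ i), Pi.add_apply, e₁ i, e₂ i]⟩
  have hSsmul : ∀ (r : ℝ), 0 < r → ∀ t ∈ S, r • t ∈ S := by
    rintro r hr t ⟨μ, hμ, e⟩
    refine ⟨ENNReal.ofReal r • μ, fun i => (hμ i).smul_measure ENNReal.ofReal_ne_top,
      fun i => ?_⟩
    rw [integral_smul_measure, ENNReal.toReal_ofReal hr.le, Pi.smul_apply, smul_eq_mul,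
      e i, smul_eq_mul]
  have hSconv : Convex ℝ S := by
    intro u hu v hv p q hp hq hpq
    rcases eq_or_lt_of_le hp with rfl | hp'
    · rw [zero_add] at hpq; subst hpq; simpa using hv
    rcases eq_or_lt_of_le hq with rfl | hq'
    · rw [add_zero] at hpq; subst hpq; simpa using hu
    exact hSadd _ (hSsmul p hp' u hu) _ (hSsmul q hq' v hv)
  have hdirac : ∀ x : X, sA x ∈ S := fun x =>
    ⟨Measure.dirac x, fun i => integrable_dirac_of_measurable (ha i) x,
      fun i => (integral_dirac' (a i) x (ha i).stronglyMeasurable).symm⟩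
  have hsF : s ∈ F := intrinsicInterior_subset hsI
  have h0F : (0 : Fin m → ℝ) ∈ F := face_zero hS0 hSsmul hext ⟨s, hsF⟩
  -- part 1
  have part1 : ∀ x : X, sA x ∈ F ↔ x ∈ W := by
    intro x
    have hLmeas : MeasurableSet {y : X | ∀ i, a i y = a i x} := by
      have h : {y : X | ∀ i, a i y = a i x} = ⋂ i, (a i) ⁻¹' {a i x} := by ext y; simp
      rw [h]
      exact MeasurableSet.iInter fun i => (ha i) (measurableSet_singleton _)
    constructor
    · intro hxF
      obtain ⟨z, hzF, l, hl, hle⟩ := intrinsic_extend hsI hxF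
      obtain ⟨ν, hνint, hνrep⟩ : ∃ μ : Measure X,
          (∀ i, Integrable (a i) μ) ∧ ∀ i, z i = ∫ y, a i y ∂μ := hext.1 hzF
      show ∃ μ : Measure X, (∀ i, Integrable (a i) μ) ∧
        (∀ i, s i = ∫ y, a i y ∂μ) ∧ 0 < μ {y | ∀ i, a i y = a i x}
      refine ⟨ENNReal.ofReal l • Measure.dirac x + ENNReal.ofReal (1-l) • ν, ?_, ?_, ?_⟩
      · intro i
        exact ((integrable_dirac_of_measurable (ha i) x).smul_measure
          ENNReal.ofReal_ne_top).add_measure ((hνint i).smul_measure ENNReal.ofReal_ne_top)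
      · intro i
        rw [integral_add_measure ((integrable_dirac_of_measurable (ha i) x).smul_measure
            ENNReal.ofReal_ne_top) ((hνint i).smul_measure ENNReal.ofReal_ne_top),
          integral_smul_measure, integral_smul_measure, ENNReal.toReal_ofReal hl.1.le,
          ENNReal.toReal_ofReal (by linarith [hl.2] : (0:ℝ) ≤ 1 - l),
          integral_dirac' _ x (ha i).stronglyMeasurable]
        have hc := congrFun hle i
        simp only [Pi.add_apply, Pi.smul_apply, smul_eq_mul, hsA'] at hc
        rw [hc, hνrep i]
        simp [smul_eq_mul]
      · have hd1 : Measure.dirac x {y | ∀ i, a i y = a i x} = 1 := by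
          rw [Measure.dirac_apply' _ hLmeas]
          exact Set.indicator_of_mem (by simp) 1
        rw [Measure.add_apply, Measure.smul_apply, Measure.smul_apply, hd1, smul_eq_mul,
          mul_one]
        exact lt_of_lt_of_le (ENNReal.ofReal_pos.2 hl.1) le_self_add
    · intro hxW
      obtain ⟨μ, hμint, hμrep, hμpos⟩ : ∃ μ : Measure X, (∀ i, Integrable (a i) μ) ∧
        (∀ i, s i = ∫ y, a i y ∂μ) ∧ 0 < μ {y | ∀ i, a i y = a i x} := hxW
      by_cases hinf : μ {y : X | ∀ i, a i y = a i x} = ⊤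
      · have hzero : ∀ i, a i x = 0 := by
          intro i
          have hres : Integrable (a i) (μ.restrict {y | ∀ i, a i y = a i x}) :=
            (hμint i).restrict
          have hconst : Integrable (fun _ => a i x)
              (μ.restrict {y | ∀ i, a i y = a i x}) := by
            refine hres.congr ?_
            exact (ae_restrict_iff' hLmeas).2 (Filter.Eventually.of_forall fun y hy => hy i)
          rcases integrable_const_iff.1 hconst with h | h
          · exact h
          · have h := (measure_lt_top _ Set.univ : μ.restrict {y | ∀ i, a i y = a i x} Set.univ < ⊤); rw [Measure.restrict_apply_univ, hinf] at h
            exact absurd h (by simp)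
        have hx0 : sA x = 0 := funext fun i => hzero i
        rw [hx0]
        exact h0F
      · have hcpos : 0 < (μ {y : X | ∀ i, a i y = a i x}).toReal :=
          ENNReal.toReal_pos (ne_of_gt hμpos) hinf
        have ht₁S : (fun i => ∫ y in {y : X | ∀ i, a i y = a i x}, a i y ∂μ) ∈ S :=
          ⟨μ.restrict _, fun i => (hμint i).restrict, fun i => rfl⟩
        have ht₂S : (fun i => ∫ y in {y : X | ∀ i, a i y = a i x}ᶜ, a i y ∂μ) ∈ S :=
          ⟨μ.restrict _, fun i => (hμint i).restrict, fun i => rfl⟩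
        have hsplit : s = (fun i => ∫ y in {y : X | ∀ i, a i y = a i x}, a i y ∂μ)
            + (fun i => ∫ y in {y : X | ∀ i, a i y = a i x}ᶜ, a i y ∂μ) := by
          funext i
          show s i = (∫ y in {y : X | ∀ i, a i y = a i x}, a i y ∂μ)
            + ∫ y in {y : X | ∀ i, a i y = a i x}ᶜ, a i y ∂μ
          rw [integral_add_compl hLmeas (hμint i)]
          exact hμrep i
        have ht₁F := (face_split hSsmul hext hsF ht₁S ht₂S hsplit).1
        have ht₁val : (fun i => ∫ y in {y : X | ∀ i, a i y = a i x}, a i y ∂μ)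
            = (μ {y : X | ∀ i, a i y = a i x}).toReal • sA x := by
          funext i
          rw [setIntegral_congr_fun hLmeas (fun y hy => hy i), setIntegral_const]
          simp [hsA', smul_eq_mul, Measure.real]
        rw [ht₁val] at ht₁F
        have hfin := face_smul hSsmul hext ht₁F
          (c := 1/(μ {y : X | ∀ i, a i y = a i x}).toReal) (by positivity)
        rw [smul_smul, one_div, inv_mul_cancel₀ (ne_of_gt hcpos), one_smul] at hfin
        exact hfin
  -- part 2
  have part2 : W = sA ⁻¹' F := Set.ext fun x => (part1 x).symm
  -- convexity of F and additivity
  have hFconv : Convex ℝ F := face_convex hSconv hext hsI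
  have hFadd : ∀ u ∈ F, ∀ v ∈ F, u + v ∈ F := by
    intro u hu v hv
    have hmid : (1/2 : ℝ) • u + (1/2 : ℝ) • v ∈ F :=
      hFconv hu hv (by norm_num) (by norm_num) (by norm_num)
    have h2 := face_smul hSsmul hext hmid (c := 2) two_pos
    have he : (2:ℝ) * (1/2) = 1 := by norm_num
    simpa [smul_add, smul_smul, he] using h2
  -- part 3
  have part3 : F = {t | ∃ (k : ℕ) (c : Fin k → ℝ) (xs : Fin k → X),
      (∀ j, 0 ≤ c j) ∧ (∀ j, xs j ∈ W) ∧ t = ∑ j, c j • sA (xs j)} := by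
    apply Set.Subset.antisymm
    · intro t ht
      obtain ⟨ν, hνint, hνrep⟩ : ∃ μ : Measure X,
          (∀ i, Integrable (a i) μ) ∧ ∀ i, t i = ∫ y, a i y ∂μ := hext.1 ht
      obtain ⟨k, c, xs, hcpos, _, hsum⟩ := richter m (fun x i => a i x) (fun i => ha i) ν
        (fun i => hνint i) ∅ MeasurableSet.empty measure_empty
      have hteq : t = ∑ j, c j • sA (xs j) := by
        funext i
        rw [hνrep i, hsum i]
        simp [Finset.sum_apply, hsA', smul_eq_mul]
      have hxW : ∀ j, xs j ∈ W := by
        intro j₀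
        have hrest : ∑ j ∈ Finset.univ.erase j₀, c j • sA (xs j) ∈ S :=
          Finset.sum_induction _ (· ∈ S) (fun u v hu hv => hSadd u hu v hv) hS0
            (fun j _ => hSsmul (c j) (hcpos j) _ (hdirac (xs j)))
        have hj₀S : c j₀ • sA (xs j₀) ∈ S := hSsmul _ (hcpos j₀) _ (hdirac (xs j₀))
        have hsplit' : t = c j₀ • sA (xs j₀) + ∑ j ∈ Finset.univ.erase j₀, c j • sA (xs j) := by
          rw [hteq, ← Finset.add_sum_erase _ _ (Finset.mem_univ j₀)]
        have hf1 := (face_split hSsmul hext ht hj₀S hrest hsplit').1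
        have hf2 := face_smul hSsmul hext hf1 (c := 1/(c j₀)) (one_div_pos.2 (hcpos j₀))
        rw [smul_smul, one_div, inv_mul_cancel₀ (ne_of_gt (hcpos j₀)), one_smul] at hf2
        exact (part1 (xs j₀)).1 hf2
      exact ⟨k, c, xs, fun j => (hcpos j).le, hxW, hteq⟩
    · rintro t ⟨k, c, xs, hc, hxs, rfl⟩
      refine Finset.sum_induction _ (· ∈ F) (fun u v hu hv => hFadd u hu v hv) h0F ?_
      intro j _
      rcases eq_or_lt_of_le (hc j) with h | h
      · rw [← h, zero_smul]; exact h0F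
      · exact face_smul hSsmul hext ((part1 (xs j)).2 (hxs j)) h
  exact ⟨part1, part2, part3⟩
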